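/- Let C be a finite maximal prefix-free set in {a,b}* with prefix set P, |P| = n. Let C̃_a be the elements of C not ending in b (taken as {1} if C = {1}), k = |C̃_a|, and i₁ < ⋯ < i_k the ranks of elements of C̃_a in the lexicographic ordering of C. Let M = |{(p,c) : p ∈ P_b \ {1}, c ∈ C_b, p < c}|, where P_b = {1} ∪ (P ∩ {a,b}*b) and C_b = C ∩ {a,b}*b. Then M + Σ_{h=1}^{k} i_h = (n+1)(k−1) + k − k(k−1)/2. -/

import Mathlib

/-- A set of words is prefix-free if no element is a proper prefix of another.
The letter `a` is `false` and the letter `b` is `true`. -/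
def PrefixFree (S : Set (List Bool)) : Prop :=
  ∀ u ∈ S, ∀ v ∈ S, u <+: v → u = v

namespace Stmt16Aux

open List

/-- basic: a word lexicographically precedes any proper extension -/
lemma lex_append_nonempty : ∀ (u t : List Bool), t ≠ [] → List.Lex (· < ·) u (u ++ t)
  | [], [], h => absurd rfl h
  | [], _ :: _, _ => List.Lex.nil
  | _ :: u, t, h => List.Lex.cons (lex_append_nonempty u t h)

lemma lex_of_prefix_ne {u v : List Bool} (h : u <+: v) (hne : u ≠ v) :
    List.Lex (· < ·) u v := by
  obtain ⟨t, rfl⟩ := h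
  refine lex_append_nonempty u t ?_
  rintro rfl; simp at hne

lemma not_lex_of_prefix {u v : List Bool} (h : u <+: v) : ¬ List.Lex (· < ·) v u := by
  rcases eq_or_ne u v with rfl | hne
  · exact fun hl => (lt_irrefl (α := List Bool) u) hl
  · exact fun hl => (asymm (lex_of_prefix_ne h hne)) hl

lemma lex_cons_cons {a b : Bool} {u v : List Bool} :
    List.Lex (· < ·) (a :: u) (b :: v) ↔ a < b ∨ (a = b ∧ List.Lex (· < ·) u v) := by
  constructor
  · intro h
    cases h with
    | rel h => exact Or.inl h
    | cons h => exact Or.inr ⟨rfl, h⟩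
  · rintro (h | ⟨rfl, h⟩)
    · exact List.Lex.rel h
    · exact List.Lex.cons h

lemma lex_append_left_iff (s : List Bool) {u v : List Bool} :
    List.Lex (· < ·) (s ++ u) (s ++ v) ↔ List.Lex (· < ·) u v := by
  induction s with
  | nil => exact Iff.rfl
  | cons a s ih => simp [List.cons_append, lex_cons_cons, lt_irrefl, ih, -List.lex_lt]

lemma lex_append_right_iff : ∀ (v : List Bool) {u : List Bool} (w : List Bool),
    ¬ v <+: u → (List.Lex (· < ·) u (v ++ w) ↔ List.Lex (· < ·) u v)
  | [], u, w, h => absurd (List.nil_prefix) h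
  | b :: v', [], w, _ => iff_of_true List.Lex.nil List.Lex.nil
  | b :: v', a :: u', w, h => by
    rw [List.cons_append, lex_cons_cons, lex_cons_cons]
    rcases eq_or_ne a b with rfl | hne
    · have h' : ¬ v' <+: u' := fun hh => h (List.cons_prefix_cons.mpr ⟨rfl, hh⟩)
      rw [lex_append_right_iff v' w h']
    · simp [hne]

lemma prefix_of_lex_replicate : ∀ (m : ℕ) (t : List Bool),
    List.Lex (· < ·) t (List.replicate m false) → t <+: List.replicate m false
  | 0, t, h => absurd h List.not_lex_nil
  | m + 1, t, h => by
    rw [List.replicate_succ] at h ⊢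
    cases h with
    | nil => exact List.nil_prefix
    | rel hr => simp [Bool.lt_iff] at hr
    | cons h' => exact List.cons_prefix_cons.mpr ⟨rfl, prefix_of_lex_replicate m _ h'⟩

lemma eq_replicate_of_prefix {t : List Bool} {m : ℕ}
    (h : t <+: List.replicate m false) : t = List.replicate t.length false :=
  List.eq_replicate_iff.mpr ⟨rfl, fun b hb => List.eq_of_mem_replicate (h.sublist.subset hb)⟩

lemma getLast?_rep (m : ℕ) (hm : m ≠ 0) :
    (List.replicate m false).getLast? = some false := by
  obtain ⟨j, rfl⟩ := Nat.exists_eq_succ_of_ne_zero hm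
  rw [List.replicate_succ', List.getLast?_concat]

/-- strip trailing `false`s -/
def strip (w : List Bool) : List Bool := (w.reverse.dropWhile (fun x => !x)).reverse

lemma strip_prefix (w : List Bool) : strip w <+: w := by
  have : (w.reverse.dropWhile (fun x => !x)).reverse <+: w.reverse.reverse :=
    List.reverse_prefix.mpr (List.dropWhile_suffix _)
  simpa [strip] using this

lemma strip_spec (w : List Bool) : ∃ m, w = strip w ++ List.replicate m false := by
  refine ⟨(w.reverse.takeWhile (fun x => !x)).length, ?_⟩
  have h1 : w.reverse.takeWhile (fun x => !x)
      = List.replicate (w.reverse.takeWhile (fun x => !x)).length false :=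
    List.eq_replicate_iff.mpr ⟨rfl, fun b hb => by
      have := List.mem_takeWhile_imp hb; simpa using this⟩
  conv_lhs => rw [← List.reverse_reverse w,
    ← List.takeWhile_append_dropWhile (p := fun x => !x) (l := w.reverse)]
  rw [List.reverse_append]
  conv_lhs => rw [h1, List.reverse_replicate]
  rfl

lemma strip_last (w : List Bool) :
    strip w = [] ∨ (strip w).getLast? = some true := by
  rcases hd : w.reverse.dropWhile (fun x => !x) with _ | ⟨a, d⟩
  · left; simp [strip, hd]
  · right
    have ha : (fun x => !x) ((w.reverse.dropWhile (fun x => !x)).head (by simp [hd])) = false :=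
      List.head_dropWhile_not (fun x => !x) (l := w.reverse) (by simp [hd])
    simp only [hd, List.head_cons, Bool.not_eq_false'] at ha
    subst ha
    simp [strip, hd]

lemma strip_append {q : List Bool} (hq : q = [] ∨ q.getLast? = some true) (m : ℕ) :
    strip (q ++ List.replicate m false) = q := by
  have hrep : (List.replicate m false).dropWhile (fun x => !x) = [] := by
    rw [List.dropWhile_eq_nil_iff]
    intro x hx
    simp [List.eq_of_mem_replicate hx]
  unfold strip
  rw [List.reverse_append, List.reverse_replicate, List.dropWhile_append, hrep]
  simp only [List.isEmpty_nil, if_true]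
  rcases hq with rfl | hq
  · simp
  · rcases hqr : q.reverse with _ | ⟨a, r⟩
    · simp at hqr; subst hqr; simp at hq
    · have : q.reverse.head? = some true := by rw [List.head?_reverse]; exact hq
      rw [hqr] at this
      simp only [List.head?_cons, Option.some_inj] at this
      subst this
      rw [List.dropWhile_cons]
      simp only [Bool.not_true, Bool.false_eq_true, if_false]
      rw [← hqr, List.reverse_reverse]

lemma card_filter_product {α β : Type*} [DecidableEq α] (s : Finset α) (t : Finset β)
    (p : α × β → Prop) [DecidablePred p] :
    ((s ×ˢ t).filter p).card = ∑ a ∈ s, (t.filter (fun b => p (a, b))).card := by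
  rw [Finset.card_eq_sum_card_fiberwise
    (f := Prod.fst) (t := s)
    (fun x hx => (Finset.mem_product.mp (Finset.mem_filter.mp hx).1).1)]
  refine Finset.sum_congr rfl fun a ha => ?_
  apply Finset.card_bij (fun x _ => x.2)
  · intro x hx
    simp only [Finset.mem_filter, Finset.mem_product] at hx
    obtain ⟨⟨⟨_, hxt⟩, hp⟩, hfst⟩ := hx
    refine Finset.mem_filter.mpr ⟨hxt, ?_⟩
    have he : ((a : α), x.2) = x := by rw [← hfst]
    rw [he]; exact hp
  · intro x hx y hy hxy
    simp only [Finset.mem_filter] at hx hy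
    exact Prod.ext (hx.2.trans hy.2.symm) hxy
  · intro b hb
    simp only [Finset.mem_filter] at hb
    refine ⟨(a, b), Finset.mem_filter.mpr ⟨Finset.mem_filter.mpr
      ⟨Finset.mem_product.mpr ⟨ha, hb.1⟩, hb.2⟩, rfl⟩, rfl⟩

lemma two_mul_sum_card : ∀ (N : ℕ) (T : Finset (List Bool)), T.card = N →
    2 * ∑ x ∈ T, (T.filter fun y => x = y ∨ List.Lex (· < ·) x y).card = N * (N + 1) := by
  intro N
  induction N with
  | zero =>
    intro T hT
    rw [Finset.card_eq_zero] at hT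
    subst hT; simp
  | succ N ih =>
    intro T hT
    have hne : T.Nonempty := by rw [← Finset.card_pos, hT]; omega
    set m := T.min' hne with hm
    have hmT : m ∈ T := T.min'_mem hne
    have hS : (T.erase m).card = N := by rw [Finset.card_erase_of_mem hmT, hT]; omega
    have hfm : T.filter (fun y => m = y ∨ List.Lex (· < ·) m y) = T :=
      Finset.filter_true_of_mem (fun y hy => (eq_or_lt_of_le (T.min'_le y hy)).imp id id)
    have hterm : ∀ x ∈ T.erase m,
        (T.filter fun y => x = y ∨ List.Lex (· < ·) x y)
          = ((T.erase m).filter fun y => x = y ∨ List.Lex (· < ·) x y) := by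
      intro x hx
      rw [Finset.filter_erase, Finset.erase_eq_of_notMem]
      intro hmem
      rw [Finset.mem_filter] at hmem
      have hxT : x ∈ T := Finset.mem_of_mem_erase hx
      have hxm : x ≠ m := (Finset.mem_erase.mp hx).1
      have hle : m ≤ x := T.min'_le x hxT
      rcases hmem.2 with h | h
      · exact hxm h
      · exact absurd (lt_of_le_of_lt hle h) (lt_irrefl m)
    have hsum : ∑ x ∈ T, (T.filter fun y => x = y ∨ List.Lex (· < ·) x y).card
        = (N + 1) + ∑ x ∈ T.erase m,
            ((T.erase m).filter fun y => x = y ∨ List.Lex (· < ·) x y).card := by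
      rw [← Finset.add_sum_erase T _ hmT, hfm, hT]
      congr 1
      exact Finset.sum_congr rfl (fun x hx => by rw [hterm x hx])
    have h2 := ih (T.erase m) hS
    rw [hsum, Nat.mul_add, h2]
    ring

end Stmt16Aux

open Stmt16Aux in
/-- Let C be a finite maximal prefix-free set with |C| = n+1 and P its set of proper
prefixes, |P| = n. Let C̃_a be the words of C not ending in b, k = |C̃_a|, and
i₁ < … < i_k their ranks in the lexicographic ordering of C (the rank of c being the
number of c' ∈ C with c' ≤ c).  With
M = |{(p,c) : p ∈ P_b \ {1}, c ∈ C_b, p < c}| one has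
M + Σ i_h = (n+1)(k−1) + k − k(k−1)/2. -/
theorem stmt16 (C P : Finset (List Bool)) (n : ℕ)
    (hpf : PrefixFree (↑C : Set (List Bool)))
    (hmax : ∀ w : List Bool, w ∉ C → ¬ PrefixFree (insert w (↑C : Set (List Bool))))
    (hP : ∀ p : List Bool, p ∈ P ↔ ∃ c ∈ C, p <+: c ∧ p ≠ c)
    (hn : P.card = n) (hC : C.card = n + 1) :
    {pc : List Bool × List Bool |
        pc.1 ∈ P ∧ pc.1.getLast? = some true ∧ pc.2 ∈ C ∧ pc.2.getLast? = some true ∧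
        List.Lex (· < ·) pc.1 pc.2}.ncard
      + ∑ c ∈ C.filter (fun w => w.getLast? ≠ some true),
          {c' : List Bool | c' ∈ C ∧ (c' = c ∨ List.Lex (· < ·) c' c)}.ncard
    = (n + 1) * ((C.filter (fun w => w.getLast? ≠ some true)).card - 1)
        + (C.filter (fun w => w.getLast? ≠ some true)).card
        - (C.filter (fun w => w.getLast? ≠ some true)).card *
            ((C.filter (fun w => w.getLast? ≠ some true)).card - 1) / 2 := by
  set Ca := C.filter (fun w => w.getLast? ≠ some true) with hCadef
  set Cb := C.filter (fun w => w.getLast? = some true) with hCbdef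
  set Pb := P.filter (fun w => w.getLast? = some true) with hPbdef
  set T := insert ([] : List Bool) Pb with hTdef
  classical
  have hCaC : Ca ⊆ C := by rw [hCadef]; exact Finset.filter_subset _ _
  have hPbP : Pb ⊆ P := by rw [hPbdef]; exact Finset.filter_subset _ _
  -- maximality: every word is prefix-comparable to C
  have hcomp : ∀ w : List Bool, w ∉ C → ∃ c ∈ C, c ≠ w ∧ (c <+: w ∨ w <+: c) := by
    intro w hw
    have h := hmax w hw
    rw [PrefixFree] at h
    push_neg at h
    obtain ⟨u, hu, v, hv, huv, hne⟩ := h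
    rcases Set.mem_insert_iff.mp hu with hu1 | hu1 <;>
      rcases Set.mem_insert_iff.mp hv with hv1 | hv1
    · exact absurd (hu1.trans hv1.symm) hne
    · subst hu1; exact ⟨v, hv1, Ne.symm hne, Or.inr huv⟩
    · subst hv1; exact ⟨u, hu1, hne, Or.inl huv⟩
    · exact absurd (hpf u hu1 v hv1 huv) hne
  -- no element of C is a prefix of an element of P
  have hPnotC : ∀ p ∈ P, ∀ c ∈ C, ¬ c <+: p := by
    intro p hp c hc hcp
    obtain ⟨c', hc', hpc', hne⟩ := (hP p).1 hp
    have h1 : c = c' := hpf c hc c' hc' (hcp.trans hpc')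
    subst h1
    exact hne (hpc'.sublist.antisymm hcp.sublist)
  have hPC : ∀ p ∈ P, p ∉ C := fun p hp hpC => hPnotC p hp p hpC List.prefix_rfl
  -- surjectivity of strip : Ca → T
  have hsup : ∀ c ∈ C, c.length ≤ C.sup List.length := fun c hc => Finset.le_sup hc
  have hsurj : ∀ q : List Bool, q = [] ∨ (q ∈ P ∧ q.getLast? = some true) →
      ∃ c ∈ Ca, strip c = q := by
    intro q hq
    have hq' : q = [] ∨ q.getLast? = some true := hq.imp id And.right
    set N := C.sup List.length + 1 with hN
    have hwC : q ++ List.replicate N false ∉ C := by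
      intro hmem
      have h1 := hsup _ hmem
      simp only [List.length_append, List.length_replicate] at h1
      omega
    obtain ⟨c, hcC, hcne, hcase⟩ := hcomp _ hwC
    have hclen : c.length ≤ C.sup List.length := hsup c hcC
    rcases hcase with hcw | hwc
    · have hqw : q <+: q ++ List.replicate N false := List.prefix_append _ _
      rcases le_or_gt c.length q.length with hle | hlt
      · have hcq : c <+: q := List.prefix_of_prefix_length_le hcw hqw hle
        rcases hq with rfl | ⟨hqP, _⟩
        · have hc0 : c = [] := List.prefix_nil.mp hcq
          subst hc0
          refine ⟨[], ?_, by simp [strip]⟩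
          rw [hCadef]; exact Finset.mem_filter.mpr ⟨hcC, by simp⟩
        · exact absurd hcq (hPnotC q hqP c hcC)
      · have hqc : q <+: c := List.prefix_of_prefix_length_le hqw hcw hlt.le
        obtain ⟨t, rfl⟩ := hqc
        have htrep : t <+: List.replicate N false := (List.prefix_append_right_inj q).mp hcw
        have ht : t = List.replicate t.length false := eq_replicate_of_prefix htrep
        refine ⟨q ++ t, ?_, by rw [ht]; exact strip_append hq' t.length⟩
        rw [hCadef]
        refine Finset.mem_filter.mpr ⟨hcC, ?_⟩
        rcases hq with rfl | ⟨hqP, _⟩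
        · simp only [List.nil_append]
          rcases Nat.eq_zero_or_pos t.length with h0 | h0
          · rw [List.length_eq_zero_iff.mp h0]; simp
          · rw [ht, getLast?_rep _ (by omega)]; simp
        · have htne : t ≠ [] := by rintro rfl; exact hPC q hqP (by simpa using hcC)
          rw [List.getLast?_append_of_ne_nil _ htne, ht,
            getLast?_rep _ (fun h0 => htne (List.length_eq_zero_iff.mp h0))]
          simp
    · exfalso
      have := hwc.length_le
      simp only [List.length_append, List.length_replicate] at this
      omega
  -- injectivity of strip on Ca
  have hinj : ∀ c₁ ∈ Ca, ∀ c₂ ∈ Ca, strip c₁ = strip c₂ → c₁ = c₂ := by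
    intro c₁ h₁ c₂ h₂ he
    obtain ⟨m₁, hm₁⟩ := strip_spec c₁
    obtain ⟨m₂, hm₂⟩ := strip_spec c₂
    rcases le_total m₁ m₂ with hle | hle
    · refine hpf c₁ (hCaC h₁) c₂ (hCaC h₂) ?_
      rw [hm₁, hm₂, ← he]
      exact (List.prefix_append_right_inj _).mpr ⟨List.replicate (m₂ - m₁) false, by
        rw [← List.replicate_add]; congr 1; omega⟩
    · refine (hpf c₂ (hCaC h₂) c₁ (hCaC h₁) ?_).symm
      rw [hm₁, hm₂, he]
      exact (List.prefix_append_right_inj _).mpr ⟨List.replicate (m₁ - m₂) false, by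
        rw [← List.replicate_add]; congr 1; omega⟩
  -- strip maps Ca into T
  have hmemT : ∀ c ∈ Ca, strip c = [] ∨ (strip c ∈ P ∧ (strip c).getLast? = some true) := by
    intro c hc
    rcases strip_last c with h | h
    · exact Or.inl h
    · refine Or.inr ⟨(hP _).mpr ⟨c, hCaC hc, strip_prefix c, ?_⟩, h⟩
      intro he
      have h2 : c.getLast? ≠ some true := by
        rw [hCadef] at hc; exact (Finset.mem_filter.mp hc).2
      rw [he] at h
      exact h2 h
  have hTmem : ∀ q : List Bool, q ∈ T ↔ (q = [] ∨ (q ∈ P ∧ q.getLast? = some true)) := by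
    intro q
    rw [hTdef, Finset.mem_insert, hPbdef, Finset.mem_filter]
  have himage : Ca.image strip = T := by
    ext q
    rw [Finset.mem_image, hTmem]
    constructor
    · rintro ⟨c, hc, rfl⟩; exact hmemT c hc
    · intro hq; obtain ⟨c, hc, he⟩ := hsurj q hq; exact ⟨c, hc, he⟩
  have hnilPb : ([] : List Bool) ∉ Pb := by rw [hPbdef, Finset.mem_filter]; simp
  have hTcard : T.card = Pb.card + 1 := by rw [hTdef, Finset.card_insert_of_notMem hnilPb]
  have hkT : T.card = Ca.card := by
    rw [← himage]
    exact Finset.card_image_of_injOn (fun c₁ h₁ c₂ h₂ => hinj c₁ h₁ c₂ h₂)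
  have hkpos : 1 ≤ Ca.card := by
    obtain ⟨c, hc, -⟩ := hsurj [] (Or.inl rfl)
    exact Finset.card_pos.mpr ⟨c, hc⟩
  obtain ⟨k', hk'⟩ : ∃ k', Ca.card = k' + 1 := ⟨Ca.card - 1, by omega⟩
  have hPbcard : Pb.card = k' := by omega
  -- K1 : comparison with c reduces to comparison with strip c
  have hK1 : ∀ c ∈ Ca, ∀ c' ∈ C, c' ≠ c →
      (List.Lex (· < ·) c' c ↔ List.Lex (· < ·) c' (strip c)) := by
    intro c hc c' hc' hne
    obtain ⟨m, hm⟩ := strip_spec c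
    set q := strip c with hq
    by_cases hqc' : q <+: c'
    · obtain ⟨t, ht⟩ := hqc'
      have htne : t ≠ List.replicate m false := by
        rintro rfl; exact hne (by rw [← ht]; exact hm.symm)
      have hnp : ¬ t <+: List.replicate m false := by
        intro hp
        apply hne
        refine hpf c' hc' c (hCaC hc) ?_
        rw [← ht, hm]
        exact (List.prefix_append_right_inj _).mpr hp
      have hlex : List.Lex (· < ·) (List.replicate m false) t := by
        rcases lt_trichotomy t (List.replicate m false) with h | h | h
        · exact absurd (prefix_of_lex_replicate m t h) hnp
        · exact absurd h htne
        · exact h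
      have h1 : List.Lex (· < ·) c c' := by
        rw [hm, ← ht]
        exact List.Lex.append_left _ hlex _
      exact iff_of_false (fun h => (asymm h1) h) (not_lex_of_prefix ⟨t, ht⟩)
    · conv_lhs => rw [hm]
      exact lex_append_right_iff q (List.replicate m false) hqc'
  have hnotlex_strip : ∀ c : List Bool, ¬ List.Lex (· < ·) c (strip c) :=
    fun c => not_lex_of_prefix (strip_prefix c)
  -- K2 : rank of c in terms of strip c
  have hK2 : ∀ c ∈ Ca, (C.filter fun c' => c' = c ∨ List.Lex (· < ·) c' c).card
      = (C.filter fun c' => List.Lex (· < ·) c' (strip c)).card + 1 := by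
    intro c hc
    have hcC : c ∈ C := hCaC hc
    have hset : C.filter (fun c' => c' = c ∨ List.Lex (· < ·) c' c)
        = insert c (C.filter fun c' => List.Lex (· < ·) c' (strip c)) := by
      ext c'
      simp only [Finset.mem_filter, Finset.mem_insert]
      constructor
      · rintro ⟨hc'C, rfl | hlex⟩
        · exact Or.inl rfl
        · by_cases he : c' = c
          · exact Or.inl he
          · exact Or.inr ⟨hc'C, (hK1 c hc c' hc'C he).mp hlex⟩
      · rintro (rfl | ⟨hc'C, hlex⟩)
        · exact ⟨hcC, Or.inl rfl⟩
        · have he : c' ≠ c := by rintro rfl; exact hnotlex_strip c' hlex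
          exact ⟨hc'C, Or.inr ((hK1 c hc c' hc'C he).mpr hlex)⟩
    rw [hset, Finset.card_insert_of_notMem]
    simp only [Finset.mem_filter, not_and]
    exact fun _ => hnotlex_strip c
  -- K3 : comparison p < c reduces to comparison with strip c
  have hK3 : ∀ p ∈ P, p.getLast? = some true → ∀ c ∈ Ca,
      (List.Lex (· < ·) p c ↔ (p = strip c ∨ List.Lex (· < ·) p (strip c))) := by
    intro p hpP hplast c hc
    have hcC : c ∈ C := hCaC hc
    have hpc_ne : c ≠ p := fun h => hPC p hpP (h ▸ hcC)
    obtain ⟨m, hm⟩ := strip_spec c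
    set q := strip c with hq
    by_cases hpq : p = q
    · refine iff_of_true ?_ (Or.inl hpq)
      exact lex_of_prefix_ne (hpq ▸ strip_prefix c) (Ne.symm hpc_ne)
    by_cases h1 : p <+: q
    · exact iff_of_true
        (lex_of_prefix_ne (h1.trans (strip_prefix c)) (Ne.symm hpc_ne))
        (Or.inr (lex_of_prefix_ne h1 hpq))
    by_cases h2 : q <+: p
    · obtain ⟨t, ht⟩ := h2
      have htne : t ≠ [] := by rintro rfl; exact hpq (by rw [← ht, List.append_nil])
      have htlast : t.getLast? = some true := by
        rw [← ht, List.getLast?_append_of_ne_nil _ htne] at hplast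
        exact hplast
      refine iff_of_false ?_ ?_
      · rw [hm, ← ht, lex_append_left_iff]
        intro hlex
        have ht2 := eq_replicate_of_prefix (prefix_of_lex_replicate m t hlex)
        rw [ht2, getLast?_rep _ (fun h0 => htne (List.length_eq_zero_iff.mp h0))] at htlast
        simp at htlast
      · rintro (h | h)
        · exact hpq h
        · exact not_lex_of_prefix ⟨t, ht⟩ h
    · conv_lhs => rw [hm]
      rw [lex_append_right_iff q (List.replicate m false) h2]
      simp [hpq]
  -- convert the first ncard
  have hM1 : {pc : List Bool × List Bool |
        pc.1 ∈ P ∧ pc.1.getLast? = some true ∧ pc.2 ∈ C ∧ pc.2.getLast? = some true ∧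
        List.Lex (· < ·) pc.1 pc.2}
      = ↑((Pb ×ˢ Cb).filter fun pc => List.Lex (· < ·) pc.1 pc.2) := by
    ext ⟨p, c⟩
    simp only [Set.mem_setOf_eq, Finset.coe_filter, Finset.mem_product, hPbdef, hCbdef,
      Finset.mem_filter, Set.mem_setOf_eq]
    tauto
  have hM2 : {pc : List Bool × List Bool |
        pc.1 ∈ P ∧ pc.1.getLast? = some true ∧ pc.2 ∈ C ∧ pc.2.getLast? = some true ∧
        List.Lex (· < ·) pc.1 pc.2}.ncard
      = ∑ p ∈ Pb, (Cb.filter fun c => List.Lex (· < ·) p c).card := by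
    rw [hM1, Set.ncard_coe_finset, card_filter_product]
  -- convert the inner ncards
  have hS1 : ∀ c ∈ Ca,
      {c' : List Bool | c' ∈ C ∧ (c' = c ∨ List.Lex (· < ·) c' c)}.ncard
        = (C.filter fun c' => c' = c ∨ List.Lex (· < ·) c' c).card := by
    intro c _
    rw [← Set.ncard_coe_finset]
    congr 1
    ext c'
    simp [Finset.coe_filter]
  -- step 3 : the rank sum
  have hstep3 : ∑ c ∈ Ca, (C.filter fun c' => c' = c ∨ List.Lex (· < ·) c' c).card
      = (k' + 1) + ∑ p ∈ Pb, (C.filter fun c' => List.Lex (· < ·) c' p).card := by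
    rw [Finset.sum_congr rfl hK2, Finset.sum_add_distrib, Finset.sum_const, smul_eq_mul,
      mul_one, hk', add_comm]
    congr 1
    have h2 : (C.filter fun c' => List.Lex (· < ·) c' ([] : List Bool)) = ∅ :=
      Finset.filter_false_of_mem (fun c' _ h => List.not_lex_nil h)
    calc ∑ c ∈ Ca, (C.filter fun c' => List.Lex (· < ·) c' (strip c)).card
        = ∑ q ∈ Ca.image strip, (C.filter fun c' => List.Lex (· < ·) c' q).card :=
          (Finset.sum_image
            (f := fun q => (C.filter fun c' => List.Lex (· < ·) c' q).card) hinj).symm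
      _ = ∑ q ∈ T, (C.filter fun c' => List.Lex (· < ·) c' q).card := by rw [himage]
      _ = ∑ p ∈ Pb, (C.filter fun c' => List.Lex (· < ·) c' p).card := by
          rw [hTdef, Finset.sum_insert hnilPb, h2, Finset.card_empty, zero_add]
  -- step 4 : trichotomy count
  have hsplit : ∀ p : List Bool, (C.filter fun c => List.Lex (· < ·) p c).card
      = (Cb.filter fun c => List.Lex (· < ·) p c).card
        + (Ca.filter fun c => List.Lex (· < ·) p c).card := by
    intro p
    have h := Finset.card_filter_add_card_filter_not
      (s := C.filter fun c => List.Lex (· < ·) p c) (p := fun w => w.getLast? = some true)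
    have e1 : (C.filter fun c => List.Lex (· < ·) p c).filter (fun w => w.getLast? = some true)
        = Cb.filter fun c => List.Lex (· < ·) p c := by
      rw [hCbdef]; ext x; simp only [Finset.mem_filter]; tauto
    have e2 : (C.filter fun c => List.Lex (· < ·) p c).filter
          (fun w => ¬ w.getLast? = some true)
        = Ca.filter fun c => List.Lex (· < ·) p c := by
      rw [hCadef]; ext x; simp only [Finset.mem_filter, Ne]; tauto
    rw [e1, e2] at h
    omega
  have htri : ∀ p ∈ P, (C.filter fun c => List.Lex (· < ·) p c).card
      + (C.filter fun c => List.Lex (· < ·) c p).card = n + 1 := by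
    intro p hpP
    have e : C.filter (fun c => List.Lex (· < ·) c p)
        = C.filter (fun c => ¬ List.Lex (· < ·) p c) := by
      apply Finset.filter_congr
      intro c hcC
      constructor
      · exact fun h h' => (asymm h) h'
      · intro h
        rcases lt_trichotomy c p with h1 | h1 | h1
        · exact h1
        · exact absurd (h1 ▸ hcC) (hPC p hpP)
        · exact absurd h1 h
    rw [e, Finset.card_filter_add_card_filter_not, hC]
  have hstep4 : ∑ p ∈ Pb, (Cb.filter fun c => List.Lex (· < ·) p c).card
      + (∑ p ∈ Pb, (C.filter fun c' => List.Lex (· < ·) c' p).card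
      + ∑ p ∈ Pb, (Ca.filter fun c => List.Lex (· < ·) p c).card) = k' * (n + 1) := by
    rw [← Finset.sum_add_distrib, ← Finset.sum_add_distrib]
    calc ∑ p ∈ Pb, ((Cb.filter fun c => List.Lex (· < ·) p c).card
          + ((C.filter fun c' => List.Lex (· < ·) c' p).card
          + (Ca.filter fun c => List.Lex (· < ·) p c).card))
        = ∑ _p ∈ Pb, (n + 1) := by
          refine Finset.sum_congr rfl fun p hp => ?_
          have h1 := htri p (hPbP hp)
          have h2 := hsplit p
          omega
      _ = k' * (n + 1) := by rw [Finset.sum_const, smul_eq_mul, hPbcard]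
  -- step 5 : relating the Ca-count to ranks within T
  have hDeq : ∀ p ∈ Pb, (Ca.filter fun c => List.Lex (· < ·) p c).card
      = (T.filter fun q => p = q ∨ List.Lex (· < ·) p q).card := by
    intro p hp
    have hpP : p ∈ P := hPbP hp
    have hpl : p.getLast? = some true := by
      rw [hPbdef] at hp; exact (Finset.mem_filter.mp hp).2
    have e1 : Ca.filter (fun c => List.Lex (· < ·) p c)
        = Ca.filter (fun c => p = strip c ∨ List.Lex (· < ·) p (strip c)) :=
      Finset.filter_congr (fun c hc => hK3 p hpP hpl c hc)
    rw [e1, ← himage, Finset.filter_image, Finset.card_image_of_injOn]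
    intro c₁ h₁ c₂ h₂
    exact hinj c₁ (Finset.mem_of_mem_filter _ h₁) c₂ (Finset.mem_of_mem_filter _ h₂)
  have hTrank : 2 * ∑ q ∈ T, (T.filter fun q' => q = q' ∨ List.Lex (· < ·) q q').card
      = (k' + 1) * (k' + 1 + 1) :=
    two_mul_sum_card (k' + 1) T (by omega)
  have hTsplit : ∑ q ∈ T, (T.filter fun q' => q = q' ∨ List.Lex (· < ·) q q').card
      = (k' + 1) + ∑ p ∈ Pb, (Ca.filter fun c => List.Lex (· < ·) p c).card := by
    rw [hTdef, Finset.sum_insert hnilPb]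
    congr 1
    · have hfull : ((insert ([] : List Bool) Pb).filter
          fun q' => ([] : List Bool) = q' ∨ List.Lex (· < ·) ([] : List Bool) q') =
          insert ([] : List Bool) Pb := by
        refine Finset.filter_true_of_mem fun q' _ => ?_
        rcases (show List.Lex (fun x1 x2 : Bool => x1 < x2) [] q' ∨ q' = [] by
          cases q' with
          | nil => exact Or.inr rfl
          | cons _ _ => exact Or.inl List.Lex.nil) with h | h
        · exact Or.inr h
        · exact Or.inl h.symm
      rw [hfull, ← hTdef, hkT, hk']
    · refine Finset.sum_congr rfl fun p hp => ?_
      rw [hDeq p hp, hTdef]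
  -- final assembly
  rw [hM2, Finset.sum_congr rfl hS1, hstep3, hk']
  rw [hTsplit] at hTrank
  have harith : (k' + 1) * (k' + 1 + 1) = (k' + 1) * k' + 2 * (k' + 1) := by ring
  rw [harith] at hTrank
  have h3 : k' + 1 - 1 = k' := by omega
  rw [h3]
  have h4 : k' * (n + 1) = (n + 1) * k' := Nat.mul_comm _ _
  rw [h4] at hstep4
  generalize (n + 1) * k' = X at hstep4 ⊢
  generalize hQ : (k' + 1) * k' = Q at hTrank ⊢
  omega
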